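/- Let G be a finitely generated group containing a finitely generated normal subgroup C such that for every descending chain of finite-index subgroups of C with trivial intersection the rank gradient of C is zero. Let (H_i) be a descending chain of finite-index normal subgroups of G with (⋂ H_i) ∩ C = 1. Then lim (d(H_i) - 1)/[G : H_i] = 0. -/

import Mathlib

open Filter

/-- `ngen G` is `d(G)`, the minimal number of generators of the group `G`. -/
noncomputable def ngen (G : Type*) [Group G] : ℕ :=
  sInf {n | ∃ S : Finset G, S.card = n ∧ Subgroup.closure (S : Set G) = ⊤}


lemma ngen_eq_rank (G : Type*) [Group G] [Group.FG G] : ngen G = Group.rank G := by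
  apply le_antisymm
  · obtain ⟨S, h1, h2⟩ := Group.rank_spec G
    exact Nat.sInf_le ⟨S, h1, h2⟩
  · have hne : {n | ∃ S : Finset G, S.card = n ∧ Subgroup.closure (S : Set G) = ⊤}.Nonempty := by
      obtain ⟨S, h1, h2⟩ := Group.rank_spec G
      exact ⟨Group.rank G, S, h1, h2⟩
    obtain ⟨S, hS1, hS2⟩ := Nat.sInf_mem hne
    rw [ngen, ← hS1]
    exact Group.rank_le hS2

lemma ngen_eq_zero (G : Type*) [Group G] [Subsingleton G] : ngen G = 0 := by
  apply Nat.sInf_eq_zero.mpr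
  left
  refine ⟨∅, Finset.card_empty, ?_⟩
  simp only [Finset.coe_empty, Subgroup.closure_empty]
  exact Subsingleton.elim _ _

theorem rank_le_ker_add_rank_of_surjective {H Q : Type*} [Group H] [Group Q]
    [Group.FG H] (f : H →* Q) (hf : Function.Surjective f)
    [Group.FG ↥f.ker] [Group.FG Q] :
    Group.rank H ≤ Group.rank ↥f.ker + Group.rank Q := by
  classical
  obtain ⟨S, hS1, hS2⟩ := Group.rank_spec ↥f.ker
  obtain ⟨T, hT1, hT2⟩ := Group.rank_spec Q
  choose g hg using hf
  set U : Finset H := S.image (Subtype.val) ∪ T.image g with hU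
  have hker_le : f.ker ≤ Subgroup.closure (U : Set H) := by
    have h1 : f.ker = Subgroup.map f.ker.subtype ⊤ := by
      rw [← MonoidHom.range_eq_map, Subgroup.range_subtype]
    rw [h1, ← hS2, MonoidHom.map_closure]
    apply Subgroup.closure_mono
    rintro x ⟨s, hs, rfl⟩
    exact Finset.mem_coe.2 (Finset.mem_union_left _
      (Finset.mem_image_of_mem _ (Finset.mem_coe.1 hs)))
  have hmap : Subgroup.map f (Subgroup.closure (U : Set H)) = ⊤ := by
    rw [eq_top_iff, ← hT2]
    apply Subgroup.closure_le _ |>.mpr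
    intro t ht
    exact ⟨g t, Subgroup.subset_closure (Finset.mem_coe.2 (Finset.mem_union_right _
      (Finset.mem_image_of_mem _ (Finset.mem_coe.1 ht)))), hg t⟩
  have hclos : Subgroup.closure (U : Set H) = ⊤ := by
    rw [eq_top_iff]
    intro h _
    have hfh : f h ∈ Subgroup.map f (Subgroup.closure (U : Set H)) := by
      rw [hmap]; trivial
    obtain ⟨m, hm, hfm⟩ := hfh
    have hk : m⁻¹ * h ∈ f.ker := by
      simp [MonoidHom.mem_ker, map_mul, hfm]
    have : h = m * (m⁻¹ * h) := by group
    rw [this]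
    exact mul_mem hm (hker_le hk)
  calc Group.rank H ≤ U.card := Group.rank_le hclos
    _ ≤ S.card + T.card := (Finset.card_union_le _ _).trans
        (by gcongr <;> exact Finset.card_image_le)
    _ = Group.rank ↥f.ker + Group.rank Q := by rw [hS1, hT1]

/-- If a finitely generated group `G` has a finitely generated normal subgroup `C` whose
rank gradient vanishes with respect to every descending chain of finite-index subgroups
with trivial intersection, then for every descending chain `(H i)` of finite-index normal
subgroups of `G` with `(⋂ H i) ∩ C = 1` we have `lim (d(H i) - 1)/[G : H i] = 0`. -/
theorem rank_gradient_zero_of_normal_subgroup {G : Type*} [Group G] [Group.FG G]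
    (C : Subgroup G) [C.Normal] [Group.FG ↥C]
    (hC : ∀ K : ℕ → Subgroup ↥C, (∀ i, K (i + 1) ≤ K i) → (∀ i, (K i).index ≠ 0) →
      (⨅ i, K i) = ⊥ →
      Tendsto (fun i => ((ngen ↥(K i) : ℝ) - 1) / ((K i).index : ℝ)) atTop (nhds 0))
    (H : ℕ → Subgroup G) (hchain : ∀ i, H (i + 1) ≤ H i) (hnorm : ∀ i, (H i).Normal)
    (hfin : ∀ i, (H i).index ≠ 0) (hint : (⨅ i, H i) ⊓ C = ⊥) :
    Tendsto (fun i => ((ngen ↥(H i) : ℝ) - 1) / ((H i).index : ℝ)) atTop (nhds 0) := by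
  classical
  -- the induced chain in C
  set K : ℕ → Subgroup ↥C := fun i => (H i).subgroupOf C with hK
  set n : ℕ → ℕ := fun i => (K i).index with hn
  set m : ℕ → ℕ := fun i => (H i ⊔ C).index with hm
  have hKchain : ∀ i, K (i + 1) ≤ K i := fun i =>
    Subgroup.comap_mono (hchain i)
  have hKant : Antitone K := antitone_nat_of_succ_le hKchain
  have hKfin : ∀ i, n i ≠ 0 := by
    intro i
    haveI := hnorm i
    exact ne_zero_of_dvd_ne_zero (hfin i) (Subgroup.relIndex_dvd_index_of_normal (H i) C)
  have hKinf : (⨅ i, K i) = ⊥ := by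
    have h1 : (⨅ i, K i) = (⨅ i, H i).subgroupOf C := by
      ext x
      simp [hK, Subgroup.mem_subgroupOf, Subgroup.mem_iInf]
    rw [h1, Subgroup.subgroupOf_eq_bot]
    exact disjoint_iff.mpr hint
  have ha : Tendsto (fun i => ((ngen ↥(K i) : ℝ) - 1) / (n i : ℝ)) atTop (nhds 0) :=
    hC K hKchain hKfin hKinf
  -- index identity
  have hidx : ∀ i, (H i).index = n i * m i := by
    intro i
    haveI := hnorm i
    have h1 := Subgroup.relIndex_mul_index (le_sup_left : H i ≤ H i ⊔ C)
    rw [Subgroup.relIndex_sup_left] at h1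
    exact h1.symm
  have hmfin : ∀ i, m i ≠ 0 := by
    intro i
    intro h
    exact hfin i (by rw [hidx i, h, mul_zero])
  -- n tends to infinity
  have hnmono : Monotone n := by
    apply monotone_nat_of_le_succ
    intro i
    exact Nat.le_of_dvd (Nat.pos_of_ne_zero (hKfin (i + 1)))
      (Subgroup.index_dvd_of_le (hKchain i))
  have hntop : Tendsto n atTop atTop := by
    by_contra hcon
    have hbdd : ∃ B, ∀ i, n i ≤ B := by
      by_contra hb
      push_neg at hb
      exact hcon (tendsto_atTop_atTop_of_monotone hnmono
        (fun b => (hb b).imp fun i hi => hi.le))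
    obtain ⟨B, hB⟩ := hbdd
    have hne : (Set.range n).Nonempty := ⟨n 0, 0, rfl⟩
    have hbd : BddAbove (Set.range n) := ⟨B, by rintro _ ⟨i, rfl⟩; exact hB i⟩
    obtain ⟨i0, hi0⟩ := Nat.sSup_mem hne hbd
    have hconst : ∀ j, i0 ≤ j → K j = K i0 := by
      intro j hj
      have hle : K j ≤ K i0 := hKant hj
      have hidxeq : n j = n i0 := by
        apply le_antisymm
        · rw [hi0]; exact le_csSup hbd ⟨j, rfl⟩
        · exact hnmono hj
      have h2 := Subgroup.relIndex_mul_index hle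
      have h2' : (K j).relIndex (K i0) * n i0 = n i0 := by
        rw [h2]; exact hidxeq
      have h3 : (K j).relIndex (K i0) = 1 :=
        Nat.eq_of_mul_eq_mul_right (Nat.pos_of_ne_zero (hKfin i0))
          (h2'.trans (one_mul (n i0)).symm)
      exact le_antisymm hle (Subgroup.relIndex_eq_one.mp h3)
    have hbot : K i0 = ⊥ := by
      rw [← hKinf]
      apply le_antisymm
      · apply le_iInf
        intro j
        rcases le_total i0 j with h | h
        · exact (hconst j h).ge
        · exact hKant h
      · exact iInf_le _ i0
    -- contradiction with ha
    have hcard : (Nat.card ↥C : ℝ) ≠ 0 := by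
      have h4 : n i0 ≠ 0 := hKfin i0
      rw [hn] at h4
      simp only [hbot, Subgroup.index_bot] at h4
      exact_mod_cast h4
    have hev : ∀ᶠ j in atTop, ((ngen ↥(K j) : ℝ) - 1) / (n j : ℝ)
        = -1 / (Nat.card ↥C : ℝ) := by
      filter_upwards [eventually_ge_atTop i0] with j hj
      have hj' : K j = ⊥ := (hconst j hj).trans hbot
      haveI : Subsingleton ↥(K j) := by rw [hj']; infer_instance
      have hnj : n j = Nat.card ↥C := by rw [hn]; simp only [hj', Subgroup.index_bot]
      rw [ngen_eq_zero, hnj]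
      norm_num
    have heq := tendsto_nhds_unique (ha.congr' hev) tendsto_const_nhds
    exact div_ne_zero (by norm_num : (-1 : ℝ) ≠ 0) hcard heq.symm
  have hntopR : Tendsto (fun i => (n i : ℝ)) atTop atTop :=
    tendsto_natCast_atTop_atTop.comp hntop
  -- finite generation of G/C and its rank
  have hmk : Function.Surjective (QuotientGroup.mk' C) := QuotientGroup.mk'_surjective C
  haveI : Group.FG (G ⧸ C) := Group.fg_of_surjective hmk
  set r : ℕ := Group.rank (G ⧸ C) with hr
  -- main rank inequality
  have hrank : ∀ i, ngen ↥(H i) ≤ ngen ↥(K i) + m i * r := by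
    intro i
    haveI : (H i).FiniteIndex := ⟨hfin i⟩
    haveI : (K i).FiniteIndex := ⟨hKfin i⟩
    set f0 : ↥(H i) →* G ⧸ C := (QuotientGroup.mk' C).comp (H i).subtype with hf0
    set f : ↥(H i) →* ↥f0.range := f0.rangeRestrict with hf
    have hker : f.ker = C.subgroupOf (H i) := by
      rw [hf, MonoidHom.ker_rangeRestrict, hf0, ← MonoidHom.comap_ker,
        QuotientGroup.ker_mk']
      rfl
    have e : ↥(C.subgroupOf (H i)) ≃* ↥(K i) :=
      (MulEquiv.subgroupCongr (Subgroup.inf_subgroupOf_right C (H i)).symm).trans <|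
        (Subgroup.subgroupOfEquivOfLe inf_le_right).trans <|
          (MulEquiv.subgroupCongr (inf_comm C (H i))).trans <|
            (Subgroup.subgroupOfEquivOfLe inf_le_right).symm.trans
              (MulEquiv.subgroupCongr (Subgroup.inf_subgroupOf_right (H i) C))
    haveI : Group.FG ↥(C.subgroupOf (H i)) :=
      Group.fg_of_surjective (f := e.symm.toMonoidHom) e.symm.surjective
    haveI : Group.FG ↥f.ker := by rw [hker]; infer_instance
    have hrange : f0.range = Subgroup.map (QuotientGroup.mk' C) (H i) := by
      rw [hf0, MonoidHom.range_comp, Subgroup.range_subtype]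
    have hQidx : f0.range.index = m i := by
      rw [hrange, Subgroup.index_map, QuotientGroup.ker_mk',
        MonoidHom.range_eq_top.mpr hmk, Subgroup.index_top, mul_one, hm]
    haveI : f0.range.FiniteIndex := ⟨by rw [hQidx]; exact hmfin i⟩
    have h1 : Group.rank ↥(H i) ≤ Group.rank ↥f.ker + Group.rank ↥f0.range :=
      rank_le_ker_add_rank_of_surjective f f0.rangeRestrict_surjective
    have h2 : Group.rank ↥f.ker = Group.rank ↥(K i) := by
      rw [Subgroup.rank_congr hker]
      exact Group.rank_congr e
    have h3 : Group.rank ↥f0.range ≤ m i * r := by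
      have h4 := Subgroup.rank_le_index_mul_rank f0.range
      rwa [hQidx] at h4
    rw [ngen_eq_rank, ngen_eq_rank]
    omega
  -- analysis
  have hninv : Tendsto (fun i => ((n i : ℝ))⁻¹) atTop (nhds 0) :=
    hntopR.inv_tendsto_atTop
  have hlow : Tendsto (fun i => -(1 / (n i : ℝ))) atTop (nhds 0) := by
    simp only [one_div]
    simpa using hninv.neg
  have hhigh : Tendsto (fun i => |((ngen ↥(K i) : ℝ) - 1) / (n i : ℝ)| + r / (n i : ℝ))
      atTop (nhds 0) := by
    have h1 : Tendsto (fun i => |((ngen ↥(K i) : ℝ) - 1) / (n i : ℝ)|) atTop (nhds 0) := by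
      simpa using ha.abs
    have h2 : Tendsto (fun i => (r : ℝ) / (n i : ℝ)) atTop (nhds 0) := by
      simp only [div_eq_mul_inv]
      simpa using tendsto_const_nhds.mul hninv
    simpa using h1.add h2
  have hlb : ∀ i, -(1 / (n i : ℝ)) ≤ ((ngen ↥(H i) : ℝ) - 1) / ((H i).index : ℝ) := by
    intro i
    have hnpos : (0 : ℝ) < n i := by exact_mod_cast Nat.pos_of_ne_zero (hKfin i)
    have hm1 : (1 : ℝ) ≤ m i := by
      exact_mod_cast Nat.one_le_iff_ne_zero.mpr (hmfin i)
    have hdnn : (0 : ℝ) ≤ (ngen ↥(H i) : ℝ) := by positivity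
    rw [hidx i]
    push_cast
    have h2 : (n i : ℝ) ≤ (n i : ℝ) * (m i : ℝ) := le_mul_of_one_le_right hnpos.le hm1
    have hpos : (0 : ℝ) < (n i : ℝ) * (m i : ℝ) := by nlinarith
    calc -(1 / (n i : ℝ)) ≤ -(1 / ((n i : ℝ) * (m i : ℝ))) :=
          neg_le_neg (one_div_le_one_div_of_le hnpos h2)
      _ = (-1) / ((n i : ℝ) * (m i : ℝ)) := (neg_div _ _).symm
      _ ≤ ((ngen ↥(H i) : ℝ) - 1) / ((n i : ℝ) * (m i : ℝ)) :=
          (div_le_div_iff_of_pos_right hpos).mpr (by linarith)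
  have hub : ∀ i, ((ngen ↥(H i) : ℝ) - 1) / ((H i).index : ℝ)
      ≤ |((ngen ↥(K i) : ℝ) - 1) / (n i : ℝ)| + r / (n i : ℝ) := by
    intro i
    have hnpos : (0 : ℝ) < n i := by exact_mod_cast Nat.pos_of_ne_zero (hKfin i)
    have hmpos : (0 : ℝ) < m i := by exact_mod_cast Nat.pos_of_ne_zero (hmfin i)
    have hpos : (0 : ℝ) < (n i : ℝ) * (m i : ℝ) := by nlinarith
    have hd : ((ngen ↥(H i) : ℝ)) ≤ (ngen ↥(K i) : ℝ) + (m i : ℝ) * r := by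
      exact_mod_cast hrank i
    have habs : |((ngen ↥(K i) : ℝ) - 1) / (n i : ℝ)| = |(ngen ↥(K i) : ℝ) - 1| / (n i : ℝ) := by
      rw [abs_div, abs_of_pos hnpos]
    rw [hidx i, habs]
    push_cast
    have hsplit : ((ngen ↥(K i) : ℝ) - 1 + (m i : ℝ) * r) / ((n i : ℝ) * (m i : ℝ))
        = ((ngen ↥(K i) : ℝ) - 1) / ((n i : ℝ) * (m i : ℝ))
          + ((m i : ℝ) * r) / ((n i : ℝ) * (m i : ℝ)) := add_div _ _ _
    have hcancel : ((m i : ℝ) * r) / ((n i : ℝ) * (m i : ℝ)) = (r : ℝ) / (n i : ℝ) := by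
      field_simp
    have hone : (1 : ℝ) ≤ (m i : ℝ) := by
      exact_mod_cast Nat.one_le_iff_ne_zero.mpr (hmfin i)
    have hfirst : ((ngen ↥(K i) : ℝ) - 1) / ((n i : ℝ) * (m i : ℝ))
        ≤ |(ngen ↥(K i) : ℝ) - 1| / (n i : ℝ) := by
      calc ((ngen ↥(K i) : ℝ) - 1) / ((n i : ℝ) * (m i : ℝ))
          ≤ |(ngen ↥(K i) : ℝ) - 1| / ((n i : ℝ) * (m i : ℝ)) :=
            (div_le_div_iff_of_pos_right hpos).mpr (le_abs_self _)
        _ ≤ |(ngen ↥(K i) : ℝ) - 1| / (n i : ℝ) :=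
            div_le_div_of_nonneg_left (abs_nonneg _) hnpos
              (le_mul_of_one_le_right hnpos.le hone)
    calc ((ngen ↥(H i) : ℝ) - 1) / ((n i : ℝ) * (m i : ℝ))
        ≤ ((ngen ↥(K i) : ℝ) - 1 + (m i : ℝ) * r) / ((n i : ℝ) * (m i : ℝ)) :=
          (div_le_div_iff_of_pos_right hpos).mpr (by linarith)
      _ = ((ngen ↥(K i) : ℝ) - 1) / ((n i : ℝ) * (m i : ℝ))
          + ((m i : ℝ) * r) / ((n i : ℝ) * (m i : ℝ)) := hsplit
      _ ≤ |(ngen ↥(K i) : ℝ) - 1| / ((n i : ℝ)) + (r : ℝ) / (n i : ℝ) := by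
          rw [hcancel]
          exact add_le_add hfirst le_rfl
  exact tendsto_of_tendsto_of_tendsto_of_le_of_le hlow hhigh hlb hub
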